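/- For simple random sampling without replacement of size n ≥ 3 from a population of size N ≥ 3, E[S_a S_b S_c] = λ(3) s_{a+b+c} + λ(12)(s_{a+b} s_c + s_{a+c} s_b + s_{b+c} s_a) + λ(1³) s_a s_b s_c, where λ(3) = e_1 − 3e_2 + 2e_3, λ(12) = e_2 − e_3, λ(1³) = e_3, and e_j = (n)_j/(N)_j. -/

import Mathlib

open Finset

section SRSAux

open Function

lemma sum_emb_trans {α β γ : Type*} [Fintype α] [Fintype β] [Fintype γ]
    [DecidableEq α] [DecidableEq β] [DecidableEq γ]
    (ι : α ↪ β) (F : (α ↪ γ) → ℝ) :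
    ∑ σ : β ↪ γ, F (ι.trans σ)
      = ((Fintype.card γ - Fintype.card α).descFactorial
            (Fintype.card β - Fintype.card α) : ℝ) * ∑ ρ : α ↪ γ, F ρ := by
  classical
  set κ := ↥(Set.range ι)ᶜ
  let e : β ≃ α ⊕ κ :=
    ((Equiv.Set.sumCompl (Set.range ι)).symm.trans
      (Equiv.sumCongr (Equiv.ofInjective ι ι.injective).symm (Equiv.refl κ)))
  have he : ∀ a : α, e.symm (Sum.inl a) = ι a := by
    intro a
    simp [e]
  have hcardκ : Fintype.card κ = Fintype.card β - Fintype.card α := by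
    simp only [κ, Fintype.card_compl_set]
    rw [Set.card_range_of_injective ι.injective]
  have step1 : ∑ σ : β ↪ γ, F (ι.trans σ)
      = ∑ σ' : α ⊕ κ ↪ γ, F (Embedding.inl.trans σ') := by
    apply Fintype.sum_equiv (Equiv.embeddingCongr e (Equiv.refl γ))
    intro σ
    congr 1
  rw [step1]
  have step2 : ∑ σ' : α ⊕ κ ↪ γ, F (Embedding.inl.trans σ')
      = ∑ p : Σ ρ : α ↪ γ, (κ ↪ ↥(Set.range ρ)ᶜ), F p.1 := by
    apply Fintype.sum_equiv (Equiv.sumEmbeddingEquivSigmaEmbeddingRestricted)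
    intro σ'
    rfl
  rw [step2, ← Finset.univ_sigma_univ, Finset.sum_sigma]
  rw [Finset.mul_sum]
  refine Finset.sum_congr rfl fun ρ _ => ?_
  dsimp only
  rw [Finset.sum_const, nsmul_eq_mul]
  congr 2
  rw [Finset.card_univ, Fintype.card_embedding_eq, hcardκ, Fintype.card_compl_set,
    Set.card_range_of_injective ρ.injective]

lemma inj2 {X : Type*} (f : Fin 2 → X) (h : ¬ (f 1 = f 0)) : Injective f := by
  intro i j hij
  fin_cases i <;> fin_cases j <;> simp_all

lemma inj3 {X : Type*} (f : Fin 3 → X) (h : ¬ (f 1 = f 0 ∨ f 2 = f 0 ∨ f 2 = f 1)) :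
    Injective f := by
  push_neg at h
  obtain ⟨h1, h2, h3⟩ := h
  intro i j hij
  fin_cases i <;> fin_cases j <;> simp_all

lemma sum_emb_one {X : Type*} [Fintype X] [DecidableEq X] (F : X → ℝ) :
    ∑ τ : Fin 1 ↪ X, F (τ 0) = ∑ p, F p :=
  Fintype.sum_equiv Equiv.uniqueEmbeddingEquivResult _ _ (fun τ => rfl)

def E2 {X : Type*} : (Fin 2 ↪ X) ≃ {t : X × X // ¬ (t.2 = t.1)} where
  toFun τ := ⟨(τ 0, τ 1), by simp [τ.injective.eq_iff]⟩
  invFun t := ⟨![t.1.1, t.1.2], inj2 _ (by simpa using t.2)⟩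
  left_inv τ := by ext i; fin_cases i <;> rfl
  right_inv t := rfl

def E3 {X : Type*} : (Fin 3 ↪ X) ≃
    {t : X × X × X // ¬ (t.2.1 = t.1 ∨ t.2.2 = t.1 ∨ t.2.2 = t.2.1)} where
  toFun τ := ⟨(τ 0, τ 1, τ 2), by simp [τ.injective.eq_iff]⟩
  invFun t := ⟨![t.1.1, t.1.2.1, t.1.2.2], inj3 _ (by simpa using t.2)⟩
  left_inv τ := by ext i; fin_cases i <;> rfl
  right_inv t := rfl

lemma sum_emb_two {X : Type*} [Fintype X] [DecidableEq X] (F : X → X → ℝ) :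
    ∑ τ : Fin 2 ↪ X, F (τ 0) (τ 1)
      = ∑ p, ∑ q, if q = p then 0 else F p q := by
  classical
  have : ∑ τ : Fin 2 ↪ X, F (τ 0) (τ 1)
      = ∑ t : {t : X × X // ¬ (t.2 = t.1)}, F t.1.1 t.1.2 :=
    Fintype.sum_equiv E2 _ _ (fun τ => rfl)
  rw [this, ← Finset.sum_subtype (Finset.univ.filter (fun t : X × X => ¬ (t.2 = t.1)))
    (by simp) (fun t : X × X => F t.1 t.2), Finset.sum_filter, Fintype.sum_prod_type]
  exact Finset.sum_congr rfl fun p _ => Finset.sum_congr rfl fun q _ => by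
    by_cases h : q = p <;> simp [h]

lemma sum_emb_three {X : Type*} [Fintype X] [DecidableEq X] (F : X → X → X → ℝ) :
    ∑ τ : Fin 3 ↪ X, F (τ 0) (τ 1) (τ 2)
      = ∑ p, ∑ q, ∑ r, if q = p ∨ r = p ∨ r = q then 0 else F p q r := by
  classical
  have : ∑ τ : Fin 3 ↪ X, F (τ 0) (τ 1) (τ 2)
      = ∑ t : {t : X × X × X // ¬ (t.2.1 = t.1 ∨ t.2.2 = t.1 ∨ t.2.2 = t.2.1)},
          F t.1.1 t.1.2.1 t.1.2.2 :=
    Fintype.sum_equiv E3 _ _ (fun τ => rfl)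
  rw [this, ← Finset.sum_subtype (Finset.univ.filter
      (fun t : X × X × X => ¬ (t.2.1 = t.1 ∨ t.2.2 = t.1 ∨ t.2.2 = t.2.1)))
    (by simp) (fun t : X × X × X => F t.1 t.2.1 t.2.2), Finset.sum_filter,
    Fintype.sum_prod_type]
  refine Finset.sum_congr rfl fun p _ => ?_
  rw [Fintype.sum_prod_type]
  exact Finset.sum_congr rfl fun q _ => Finset.sum_congr rfl fun r _ => by
    by_cases h : q = p ∨ r = p ∨ r = q <;> simp [h]

lemma ID2 {X : Type*} [Fintype X] [DecidableEq X] (f g : X → ℝ) :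
    ∑ p, ∑ q, (if q = p then 0 else f p * g q)
      = (∑ p, f p) * (∑ p, g p) - ∑ p, f p * g p := by
  have pt : ∀ p q : X, (if q = p then 0 else f p * g q)
      = f p * g q - (if q = p then f p * g q else 0) := by
    intro p q; split <;> simp
  simp_rw [pt, Finset.sum_sub_distrib, Finset.sum_ite_eq' Finset.univ,
    Finset.mem_univ, if_true, ← Finset.mul_sum, ← Finset.sum_mul]

lemma T0 {X : Type*} [Fintype X] (u v w : X → ℝ) :
    (∑ p, u p) * (∑ p, v p) * (∑ p, w p) = ∑ p, ∑ q, ∑ r, u p * v q * w r := by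
  rw [Finset.sum_mul_sum, Finset.sum_mul]
  refine Finset.sum_congr rfl fun p _ => ?_
  rw [Finset.sum_mul_sum]

lemma ID3 {X : Type*} [Fintype X] [DecidableEq X] (f g h : X → ℝ) :
    ∑ p, ∑ q, ∑ r, (if q = p ∨ r = p ∨ r = q then 0 else f p * g q * h r)
      = (∑ p, f p) * (∑ p, g p) * (∑ p, h p)
        - (∑ p, f p * g p) * (∑ p, h p)
        - (∑ p, f p * h p) * (∑ p, g p)
        - (∑ p, g p * h p) * (∑ p, f p)
        + 2 * ∑ p, f p * g p * h p := by
  have pt : ∀ p q r : X, (if q = p ∨ r = p ∨ r = q then 0 else f p * g q * h r)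
      = f p * g q * h r
        - (if q = p then f p * g q * h r else 0)
        - (if r = p then f p * g q * h r else 0)
        - (if r = q then f p * g q * h r else 0)
        + (if q = p then (if r = p then 2 * (f p * g q * h r) else 0) else 0) := by
    intro p q r
    by_cases h1 : q = p <;> by_cases h2 : r = p <;> by_cases h3 : r = q <;>
      simp_all <;> ring
  have S2 : ∑ p : X, ∑ q : X, ∑ r : X, (if q = p then f p * g q * h r else 0)
      = (∑ p, f p * g p) * (∑ p, h p) := by
    simp_rw [Finset.sum_ite_irrel, Finset.sum_const_zero,
      Finset.sum_ite_eq' Finset.univ, Finset.mem_univ, if_true, ← Finset.mul_sum,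
      ← Finset.sum_mul]
  have S3 : ∑ p : X, ∑ q : X, ∑ r : X, (if r = p then f p * g q * h r else 0)
      = (∑ p, f p * h p) * (∑ p, g p) := by
    simp_rw [Finset.sum_ite_eq' Finset.univ, Finset.mem_univ, if_true]
    rw [Finset.sum_mul]
    refine Finset.sum_congr rfl fun p _ => ?_
    rw [Finset.mul_sum]
    exact Finset.sum_congr rfl fun q _ => by ring
  have S4 : ∑ p : X, ∑ q : X, ∑ r : X, (if r = q then f p * g q * h r else 0)
      = (∑ p, g p * h p) * (∑ p, f p) := by
    simp_rw [Finset.sum_ite_eq' Finset.univ, Finset.mem_univ, if_true]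
    rw [Finset.sum_mul, Finset.sum_comm]
    refine Finset.sum_congr rfl fun p _ => ?_
    rw [Finset.mul_sum]
    exact Finset.sum_congr rfl fun q _ => by ring
  have S5 : ∑ p : X, ∑ q : X, ∑ r : X,
        (if q = p then (if r = p then 2 * (f p * g q * h r) else 0) else 0)
      = 2 * ∑ p, f p * g p * h p := by
    simp_rw [Finset.sum_ite_irrel, Finset.sum_const_zero,
      Finset.sum_ite_eq' Finset.univ, Finset.mem_univ, if_true, ← Finset.mul_sum]
  simp_rw [pt, Finset.sum_add_distrib, Finset.sum_sub_distrib]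
  rw [S2, S3, S4, S5, ← T0]

end SRSAux

/-- Expectation under simple random sampling without replacement: the average of `g`
over all ordered samples of `n` distinct indices (i.e. embeddings `Fin n ↪ Fin N`),
each equally likely. -/
noncomputable def srsExp (N n : ℕ) (g : (Fin n ↪ Fin N) → ℝ) : ℝ :=
  (∑ σ : Fin n ↪ Fin N, g σ) / (Fintype.card (Fin n ↪ Fin N))

/-- `E[S_a S_b S_c] = λ(3) s_{a+b+c} + λ(12)(s_{a+b}s_c + s_{a+c}s_b + s_{b+c}s_a)
+ λ(1³) s_a s_b s_c` with `λ(3) = e₁ - 3e₂ + 2e₃`, `λ(12) = e₂ - e₃`, `λ(1³) = e₃`. -/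
theorem srs_expect_SaSbSc (N n a b c : ℕ) (hn : 3 ≤ n) (hN : 3 ≤ N) (hnN : n ≤ N)
    (x : Fin N → ℝ) :
    srsExp N n (fun σ => (∑ i, x (σ i) ^ a) * (∑ i, x (σ i) ^ b) * (∑ i, x (σ i) ^ c))
      = ((n.descFactorial 1 : ℝ) / (N.descFactorial 1)
            - 3 * ((n.descFactorial 2 : ℝ) / (N.descFactorial 2))
            + 2 * ((n.descFactorial 3 : ℝ) / (N.descFactorial 3)))
          * (∑ j, x j ^ (a + b + c))
        + ((n.descFactorial 2 : ℝ) / (N.descFactorial 2)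
            - (n.descFactorial 3 : ℝ) / (N.descFactorial 3))
          * ((∑ j, x j ^ (a + b)) * (∑ j, x j ^ c)
            + (∑ j, x j ^ (a + c)) * (∑ j, x j ^ b)
            + (∑ j, x j ^ (b + c)) * (∑ j, x j ^ a))
        + ((n.descFactorial 3 : ℝ) / (N.descFactorial 3))
          * ((∑ j, x j ^ a) * (∑ j, x j ^ b) * (∑ j, x j ^ c)) := by
  classical
  -- per-σ decomposition
  have perσ : ∀ σ : Fin n ↪ Fin N,
      (∑ i, x (σ i) ^ a) * (∑ i, x (σ i) ^ b) * (∑ i, x (σ i) ^ c)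
      = (∑ τ : Fin 3 ↪ Fin n, x (σ (τ 0)) ^ a * x (σ (τ 1)) ^ b * x (σ (τ 2)) ^ c)
        + (∑ τ : Fin 2 ↪ Fin n, x (σ (τ 0)) ^ (a + b) * x (σ (τ 1)) ^ c)
        + (∑ τ : Fin 2 ↪ Fin n, x (σ (τ 0)) ^ (a + c) * x (σ (τ 1)) ^ b)
        + (∑ τ : Fin 2 ↪ Fin n, x (σ (τ 0)) ^ (b + c) * x (σ (τ 1)) ^ a)
        + (∑ τ : Fin 1 ↪ Fin n, x (σ (τ 0)) ^ (a + b + c)) := by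
    intro σ
    have H3 : ∑ τ : Fin 3 ↪ Fin n, x (σ (τ 0)) ^ a * x (σ (τ 1)) ^ b * x (σ (τ 2)) ^ c
        = (∑ i, x (σ i) ^ a) * (∑ i, x (σ i) ^ b) * (∑ i, x (σ i) ^ c)
          - (∑ i, x (σ i) ^ a * x (σ i) ^ b) * (∑ i, x (σ i) ^ c)
          - (∑ i, x (σ i) ^ a * x (σ i) ^ c) * (∑ i, x (σ i) ^ b)
          - (∑ i, x (σ i) ^ b * x (σ i) ^ c) * (∑ i, x (σ i) ^ a)
          + 2 * ∑ i, x (σ i) ^ a * x (σ i) ^ b * x (σ i) ^ c :=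
      (sum_emb_three (fun p q r => x (σ p) ^ a * x (σ q) ^ b * x (σ r) ^ c)).trans
        (ID3 (fun p => x (σ p) ^ a) (fun p => x (σ p) ^ b) (fun p => x (σ p) ^ c))
    have H2ab : ∑ τ : Fin 2 ↪ Fin n, x (σ (τ 0)) ^ (a + b) * x (σ (τ 1)) ^ c
        = (∑ i, x (σ i) ^ (a + b)) * (∑ i, x (σ i) ^ c)
          - ∑ i, x (σ i) ^ (a + b) * x (σ i) ^ c :=
      (sum_emb_two (fun p q => x (σ p) ^ (a + b) * x (σ q) ^ c)).trans
        (ID2 (fun p => x (σ p) ^ (a + b)) (fun p => x (σ p) ^ c))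
    have H2ac : ∑ τ : Fin 2 ↪ Fin n, x (σ (τ 0)) ^ (a + c) * x (σ (τ 1)) ^ b
        = (∑ i, x (σ i) ^ (a + c)) * (∑ i, x (σ i) ^ b)
          - ∑ i, x (σ i) ^ (a + c) * x (σ i) ^ b :=
      (sum_emb_two (fun p q => x (σ p) ^ (a + c) * x (σ q) ^ b)).trans
        (ID2 (fun p => x (σ p) ^ (a + c)) (fun p => x (σ p) ^ b))
    have H2bc : ∑ τ : Fin 2 ↪ Fin n, x (σ (τ 0)) ^ (b + c) * x (σ (τ 1)) ^ a
        = (∑ i, x (σ i) ^ (b + c)) * (∑ i, x (σ i) ^ a)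
          - ∑ i, x (σ i) ^ (b + c) * x (σ i) ^ a :=
      (sum_emb_two (fun p q => x (σ p) ^ (b + c) * x (σ q) ^ a)).trans
        (ID2 (fun p => x (σ p) ^ (b + c)) (fun p => x (σ p) ^ a))
    have H1 : ∑ τ : Fin 1 ↪ Fin n, x (σ (τ 0)) ^ (a + b + c)
        = ∑ i, x (σ i) ^ (a + b + c) := sum_emb_one (fun p => x (σ p) ^ (a + b + c))
    rw [H3, H2ab, H2ac, H2bc, H1]
    simp_rw [← pow_add, show a + c + b = a + b + c from by omega,
      show b + c + a = a + b + c from by omega]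
    ring
  -- summed versions
  have B3 : ∑ σ : Fin n ↪ Fin N,
        ∑ τ : Fin 3 ↪ Fin n, x (σ (τ 0)) ^ a * x (σ (τ 1)) ^ b * x (σ (τ 2)) ^ c
      = (n.descFactorial 3 : ℝ) * ((N - 3).descFactorial (n - 3) : ℝ)
        * ((∑ p, x p ^ a) * (∑ p, x p ^ b) * (∑ p, x p ^ c)
          - (∑ p, x p ^ a * x p ^ b) * (∑ p, x p ^ c)
          - (∑ p, x p ^ a * x p ^ c) * (∑ p, x p ^ b)
          - (∑ p, x p ^ b * x p ^ c) * (∑ p, x p ^ a)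
          + 2 * ∑ p, x p ^ a * x p ^ b * x p ^ c) := by
    rw [Finset.sum_comm]
    have inner : ∀ τ : Fin 3 ↪ Fin n,
        ∑ σ : Fin n ↪ Fin N, x (σ (τ 0)) ^ a * x (σ (τ 1)) ^ b * x (σ (τ 2)) ^ c
        = ((N - 3).descFactorial (n - 3) : ℝ)
          * ∑ ρ : Fin 3 ↪ Fin N, x (ρ 0) ^ a * x (ρ 1) ^ b * x (ρ 2) ^ c := by
      intro τ
      have h := sum_emb_trans (γ := Fin N) τ
        (fun ρ => x (ρ 0) ^ a * x (ρ 1) ^ b * x (ρ 2) ^ c)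
      simp only [Fintype.card_fin] at h
      exact h
    rw [Finset.sum_congr rfl (fun τ _ => inner τ)]
    rw [Finset.sum_const]
    rw [nsmul_eq_mul]
    rw [Finset.card_univ]
    rw [Fintype.card_embedding_eq]
    rw [Fintype.card_fin, Fintype.card_fin]
    have key : ∑ ρ : Fin 3 ↪ Fin N, x (ρ 0) ^ a * x (ρ 1) ^ b * x (ρ 2) ^ c
        = (∑ p, x p ^ a) * (∑ p, x p ^ b) * (∑ p, x p ^ c)
          - (∑ p, x p ^ a * x p ^ b) * (∑ p, x p ^ c)
          - (∑ p, x p ^ a * x p ^ c) * (∑ p, x p ^ b)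
          - (∑ p, x p ^ b * x p ^ c) * (∑ p, x p ^ a)
          + 2 * ∑ p, x p ^ a * x p ^ b * x p ^ c :=
      (sum_emb_three (fun p q r => x p ^ a * x q ^ b * x r ^ c)).trans
        (ID3 (fun p => x p ^ a) (fun p => x p ^ b) (fun p => x p ^ c))
    rw [key]; ring
  have B2 : ∀ u v : ℕ,
      ∑ σ : Fin n ↪ Fin N, ∑ τ : Fin 2 ↪ Fin n, x (σ (τ 0)) ^ u * x (σ (τ 1)) ^ v
      = (n.descFactorial 2 : ℝ) * ((N - 2).descFactorial (n - 2) : ℝ)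
        * ((∑ p, x p ^ u) * (∑ p, x p ^ v) - ∑ p, x p ^ u * x p ^ v) := by
    intro u v
    rw [Finset.sum_comm]
    have inner : ∀ τ : Fin 2 ↪ Fin n,
        ∑ σ : Fin n ↪ Fin N, x (σ (τ 0)) ^ u * x (σ (τ 1)) ^ v
        = ((N - 2).descFactorial (n - 2) : ℝ)
          * ∑ ρ : Fin 2 ↪ Fin N, x (ρ 0) ^ u * x (ρ 1) ^ v := by
      intro τ
      have h := sum_emb_trans (γ := Fin N) τ
        (fun ρ => x (ρ 0) ^ u * x (ρ 1) ^ v)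
      simp only [Fintype.card_fin] at h
      exact h
    rw [Finset.sum_congr rfl (fun τ _ => inner τ)]
    rw [Finset.sum_const]
    rw [nsmul_eq_mul]
    rw [Finset.card_univ]
    rw [Fintype.card_embedding_eq]
    rw [Fintype.card_fin, Fintype.card_fin]
    have key : ∑ ρ : Fin 2 ↪ Fin N, x (ρ 0) ^ u * x (ρ 1) ^ v
        = (∑ p, x p ^ u) * (∑ p, x p ^ v) - ∑ p, x p ^ u * x p ^ v :=
      (sum_emb_two (fun p q => x p ^ u * x q ^ v)).trans
        (ID2 (fun p => x p ^ u) (fun p => x p ^ v))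
    rw [key]; ring
  have B1 : ∑ σ : Fin n ↪ Fin N, ∑ τ : Fin 1 ↪ Fin n, x (σ (τ 0)) ^ (a + b + c)
      = (n.descFactorial 1 : ℝ) * ((N - 1).descFactorial (n - 1) : ℝ)
        * ∑ p, x p ^ (a + b + c) := by
    rw [Finset.sum_comm]
    have inner : ∀ τ : Fin 1 ↪ Fin n,
        ∑ σ : Fin n ↪ Fin N, x (σ (τ 0)) ^ (a + b + c)
        = ((N - 1).descFactorial (n - 1) : ℝ)
          * ∑ ρ : Fin 1 ↪ Fin N, x (ρ 0) ^ (a + b + c) := by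
      intro τ
      have h := sum_emb_trans (γ := Fin N) τ
        (fun ρ => x (ρ 0) ^ (a + b + c))
      simp only [Fintype.card_fin] at h
      exact h
    rw [Finset.sum_congr rfl (fun τ _ => inner τ)]
    rw [Finset.sum_const]
    rw [nsmul_eq_mul]
    rw [Finset.card_univ]
    rw [Fintype.card_embedding_eq]
    rw [Fintype.card_fin, Fintype.card_fin]
    have key : ∑ ρ : Fin 1 ↪ Fin N, x (ρ 0) ^ (a + b + c) = ∑ p, x p ^ (a + b + c) :=
      sum_emb_one (fun p => x p ^ (a + b + c))
    rw [key]; ring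
  -- numerator
  have Num : ∑ σ : Fin n ↪ Fin N,
        (∑ i, x (σ i) ^ a) * (∑ i, x (σ i) ^ b) * (∑ i, x (σ i) ^ c)
      = (n.descFactorial 3 : ℝ) * ((N - 3).descFactorial (n - 3) : ℝ)
        * ((∑ p, x p ^ a) * (∑ p, x p ^ b) * (∑ p, x p ^ c)
          - (∑ p, x p ^ a * x p ^ b) * (∑ p, x p ^ c)
          - (∑ p, x p ^ a * x p ^ c) * (∑ p, x p ^ b)
          - (∑ p, x p ^ b * x p ^ c) * (∑ p, x p ^ a)
          + 2 * ∑ p, x p ^ a * x p ^ b * x p ^ c)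
        + (n.descFactorial 2 : ℝ) * ((N - 2).descFactorial (n - 2) : ℝ)
          * ((∑ p, x p ^ (a + b)) * (∑ p, x p ^ c) - ∑ p, x p ^ (a + b) * x p ^ c)
        + (n.descFactorial 2 : ℝ) * ((N - 2).descFactorial (n - 2) : ℝ)
          * ((∑ p, x p ^ (a + c)) * (∑ p, x p ^ b) - ∑ p, x p ^ (a + c) * x p ^ b)
        + (n.descFactorial 2 : ℝ) * ((N - 2).descFactorial (n - 2) : ℝ)
          * ((∑ p, x p ^ (b + c)) * (∑ p, x p ^ a) - ∑ p, x p ^ (b + c) * x p ^ a)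
        + (n.descFactorial 1 : ℝ) * ((N - 1).descFactorial (n - 1) : ℝ)
          * ∑ p, x p ^ (a + b + c) := by
    rw [Finset.sum_congr rfl (fun σ _ => perσ σ)]
    rw [Finset.sum_add_distrib, Finset.sum_add_distrib, Finset.sum_add_distrib,
      Finset.sum_add_distrib]
    rw [B3, B2 (a + b) c, B2 (a + c) b, B2 (b + c) a, B1]
  -- final algebra
  have hDn : (N.descFactorial n : ℝ) ≠ 0 := by
    rw [Nat.cast_ne_zero]
    simp only [ne_eq, Nat.descFactorial_eq_zero_iff_lt]
    omega
  have hd : ∀ j : ℕ, j ≤ n → ((N - j).descFactorial (n - j) : ℝ) * (N.descFactorial j : ℝ)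
      = (N.descFactorial n : ℝ) := by
    intro j hj
    rw [← Nat.cast_mul, Nat.descFactorial_mul_descFactorial hj]
  have coef : ∀ u K D X : ℝ, K * D = (N.descFactorial n : ℝ) →
      u * K * X / (N.descFactorial n : ℝ) = u / D * X := by
    intro u K D X h
    have hK : K ≠ 0 := fun h0 => hDn (by rw [← h, h0, zero_mul])
    have hD : D ≠ 0 := fun h0 => hDn (by rw [← h, h0, mul_zero])
    rw [← h]
    field_simp
  rw [srsExp, Num, Fintype.card_embedding_eq, Fintype.card_fin, Fintype.card_fin]
  rw [add_div, add_div, add_div, add_div]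
  rw [coef _ _ _ _ (hd 3 hn), coef _ _ _ _ (hd 2 (by omega)),
    coef _ _ _ _ (hd 2 (by omega)), coef _ _ _ _ (hd 2 (by omega)),
    coef _ _ _ _ (hd 1 (by omega))]
  simp_rw [← pow_add, show a + c + b = a + b + c from by omega,
    show b + c + a = a + b + c from by omega]
  ring
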